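/- Let N be a positive integer. A type for ground-set size N is realizable if and only if it is admissible. -/

import Mathlib

/-- The family `m` (shape `γ` has entries `m γ 0, …, m γ (p γ - 1)`) is a type of shapes
for ground-set size `N`: each shape is a multiset of nonnegative integers summing to at
most `N`. -/
def IsType (N k : ℕ) (p : Fin k → ℕ) (m : (γ : Fin k) → Fin (p γ) → ℕ) : Prop :=
  ∀ γ, ∑ j, m γ j ≤ N

/-- The type is admissible for `N`: for every `0 ≤ x ≤ N`, the total number of entries
equal to `x` over all shapes is at most `C(N,x)`. -/
def Admissible (N k : ℕ) (p : Fin k → ℕ) (m : (γ : Fin k) → Fin (p γ) → ℕ) : Prop :=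
  ∀ x ≤ N,
    ((Finset.univ : Finset ((γ : Fin k) × Fin (p γ))).filter
      (fun q => m q.1 q.2 = x)).card ≤ N.choose x

/-- The type is realizable for `N`: there are sets `S γ j ⊆ {1,…,N}` with
`|S γ j| = m γ j`, pairwise disjoint within each `γ`, and pairwise distinct over all
pairs `(γ, j)`. -/
def Realizable (N k : ℕ) (p : Fin k → ℕ) (m : (γ : Fin k) → Fin (p γ) → ℕ) : Prop :=
  ∃ S : (γ : Fin k) → Fin (p γ) → Finset (Fin N),
    (∀ γ j, (S γ j).card = m γ j) ∧
    (∀ γ, ∀ j j' : Fin (p γ), j ≠ j' → Disjoint (S γ j) (S γ j')) ∧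
    (∀ q q' : (γ : Fin k) × Fin (p γ), q ≠ q' → S q.1 q.2 ≠ S q'.1 q'.2)


open Finset

lemma md_matching {L R : Type*} (adj : L → R → Prop)
    (M1 : L → R) (h1inj : Function.Injective M1) (h1adj : ∀ l, adj l (M1 l))
    (Y : Set R) (M2 : R → L) (h2inj : Set.InjOn M2 Y) (h2adj : ∀ r ∈ Y, adj (M2 r) r) :
    ∃ M : L → R, Function.Injective M ∧ (∀ l, adj l (M l)) ∧ ∀ r ∈ Y, ∃ l, M l = r := by
  classical
  set step : R → R → Prop := fun r r' => r ∈ Y ∧ r' = M1 (M2 r) with hstep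
  set C : Set R := {r | ∃ z, (z ∈ Y ∧ z ∉ Set.range M1) ∧ Relation.ReflTransGen step z r}
    with hC
  have hclos : ∀ r, r ∈ C → r ∈ Y → M1 (M2 r) ∈ C := by
    rintro r ⟨z, hz, hzr⟩ hrY
    exact ⟨z, hz, hzr.tail ⟨hrY, rfl⟩⟩
  have hinv : ∀ r, r ∈ C →
      (r ∈ Y ∧ r ∉ Set.range M1) ∨ ∃ r', r' ∈ C ∧ r' ∈ Y ∧ r = M1 (M2 r') := by
    rintro r ⟨z, hz, hzr⟩
    rcases Relation.ReflTransGen.cases_tail hzr with h | ⟨b, hzb, hbr⟩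
    · left; rw [h]; exact hz
    · right; exact ⟨b, ⟨z, hz, hzb⟩, hbr.1, hbr.2⟩
  set M : L → R := fun l => if h : ∃ r, r ∈ C ∧ r ∈ Y ∧ M2 r = l then h.choose else M1 l
    with hM
  have hM1 : ∀ l (h : ∃ r, r ∈ C ∧ r ∈ Y ∧ M2 r = l), M l = h.choose := by
    intro l h; simp only [hM, dif_pos h]
  have hM2 : ∀ l, (¬ ∃ r, r ∈ C ∧ r ∈ Y ∧ M2 r = l) → M l = M1 l := by
    intro l h; simp only [hM, dif_neg h]
  refine ⟨M, ?_, ?_, ?_⟩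
  · -- injective
    intro l l' he
    by_cases h : ∃ r, r ∈ C ∧ r ∈ Y ∧ M2 r = l <;>
      by_cases h' : ∃ r, r ∈ C ∧ r ∈ Y ∧ M2 r = l'
    · rw [hM1 l h, hM1 l' h'] at he
      obtain ⟨_, hY, hl⟩ := h.choose_spec
      obtain ⟨_, hY', hl'⟩ := h'.choose_spec
      rw [← hl, ← hl', he]
    · -- l branch 1, l' branch 2
      rw [hM1 l h, hM2 l' h'] at he
      obtain ⟨hC1, hY, hl⟩ := h.choose_spec
      exfalso
      rcases hinv _ hC1 with ⟨_, hnr⟩ | ⟨r'', hr''C, hr''Y, hr''⟩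
      · exact hnr ⟨l', he.symm⟩
      · have : l' = M2 r'' := h1inj (by rw [← he, hr''])
        exact h' ⟨r'', hr''C, hr''Y, this.symm⟩
    · rw [hM2 l h, hM1 l' h'] at he
      obtain ⟨hC1, hY, hl⟩ := h'.choose_spec
      exfalso
      rcases hinv _ hC1 with ⟨_, hnr⟩ | ⟨r'', hr''C, hr''Y, hr''⟩
      · exact hnr ⟨l, he⟩
      · have : l = M2 r'' := h1inj (by rw [he, hr''])
        exact h ⟨r'', hr''C, hr''Y, this.symm⟩
    · rw [hM2 l h, hM2 l' h'] at he
      exact h1inj he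
  · -- adjacency
    intro l
    by_cases h : ∃ r, r ∈ C ∧ r ∈ Y ∧ M2 r = l
    · rw [hM1 l h]
      obtain ⟨_, hY, hl⟩ := h.choose_spec
      have := h2adj _ hY; rwa [hl] at this
    · rw [hM2 l h]; exact h1adj l
  · -- saturation of Y
    intro y hy
    by_cases hyC : y ∈ C
    · refine ⟨M2 y, ?_⟩
      have h : ∃ r, r ∈ C ∧ r ∈ Y ∧ M2 r = M2 y := ⟨y, hyC, hy, rfl⟩
      rw [hM1 _ h]
      obtain ⟨_, hY, hl⟩ := h.choose_spec
      exact h2inj hY hy hl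
    · have hyR : y ∈ Set.range M1 := by
        by_contra hnr
        exact hyC ⟨y, ⟨hy, hnr⟩, Relation.ReflTransGen.refl⟩
      obtain ⟨l, hl⟩ := hyR
      refine ⟨l, ?_⟩
      have h : ¬ ∃ r, r ∈ C ∧ r ∈ Y ∧ M2 r = l := by
        rintro ⟨r, hrC, hrY, hrl⟩
        exact hyC (by rw [← hl, ← hrl]; exact hclos r hrC hrY)
      rw [hM2 l h, hl]

section Selection

variable {E K Lab : Type*} [Fintype E] [DecidableEq E] [DecidableEq K] [DecidableEq Lab]

def scnt (size : E → ℕ) (label : E → Lab) (ℓ : Lab) (x : ℕ) : ℕ :=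
  (Finset.univ.filter (fun e => label e = ℓ ∧ size e = x)).card

def sU (n x : ℕ) : ℕ := n.choose (x - 1)

def sL (n : ℕ) (size : E → ℕ) (label : E → Lab) (ℓ : Lab) (x : ℕ) : ℕ :=
  scnt size label ℓ x - n.choose x

def sFull (n : ℕ) (size : E → ℕ) (shape : E → K) (γ : K) : Prop :=
  ∑ e ∈ Finset.univ.filter (fun e => shape e = γ), size e = n + 1

instance (n : ℕ) (size : E → ℕ) (shape : E → K) (γ : K) :
    Decidable (sFull n size shape γ) := by unfold sFull; infer_instance

def t1 (n : ℕ) (size : E → ℕ) (shape : E → K) (label : E → Lab) (γ : K) :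
    Finset (((Lab × ℕ) × ℕ) ⊕ K) :=
  ((Finset.univ.filter (fun e => shape e = γ ∧ 1 ≤ size e)).biUnion
    (fun e => (Finset.range (sU n (size e))).image (fun i => Sum.inl ((label e, size e), i)))) ∪
  (if sFull n size shape γ then ∅ else {Sum.inr γ})

-- every entry's size is at most n+1
lemma size_le_of_shape (n : ℕ) (size : E → ℕ) (shape : E → K)
    (hshape : ∀ γ : K, ∑ e ∈ Finset.univ.filter (fun e => shape e = γ), size e ≤ n + 1)
    (e : E) : size e ≤ n + 1 := by
  refine le_trans ?_ (hshape (shape e))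
  exact Finset.single_le_sum (fun _ _ => Nat.zero_le _) (by simp)

lemma xmul (n x : ℕ) (hx : 1 ≤ x) : x * (n+1).choose x = (n+1) * n.choose (x - 1) := by
  obtain ⟨y, rfl⟩ : ∃ y, x = y + 1 := ⟨x - 1, (Nat.succ_pred_eq_of_pos hx).symm⟩
  simpa [mul_comm] using (Nat.add_one_mul_choose_eq n y).symm

lemma hall1 (n : ℕ) (size : E → ℕ) (shape : E → K) (label : E → Lab)
    (hshape : ∀ γ : K, ∑ e ∈ Finset.univ.filter (fun e => shape e = γ), size e ≤ n + 1)
    (hadm : ∀ (ℓ : Lab) (x : ℕ), x ≤ n + 1 → scnt size label ℓ x ≤ (n+1).choose x) :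
    ∀ s : Finset K, s.card ≤ (s.biUnion (t1 n size shape label)).card := by
  classical
  intro s
  set sf := s.filter (fun γ => sFull n size shape γ) with hsf
  set snf := s.filter (fun γ => ¬ sFull n size shape γ) with hsnf
  set F := Finset.univ.filter (fun e : E => shape e ∈ sf ∧ 1 ≤ size e) with hF
  set CT := F.image (fun e => (label e, size e)) with hCT
  set A := snf.image (Sum.inr : K → ((Lab × ℕ) × ℕ) ⊕ K) with hA
  set B := CT.biUnion (fun c => (Finset.range (sU n c.2)).image
      (fun i => (Sum.inl (c, i) : ((Lab × ℕ) × ℕ) ⊕ K))) with hB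
  -- A and B are inside the big biUnion
  have hAsub : A ⊆ s.biUnion (t1 n size shape label) := by
    intro r hr
    obtain ⟨γ, hγ, rfl⟩ := Finset.mem_image.1 hr
    obtain ⟨hγs, hγnf⟩ := Finset.mem_filter.1 hγ
    refine Finset.mem_biUnion.2 ⟨γ, hγs, ?_⟩
    unfold t1
    rw [if_neg hγnf]
    exact Finset.mem_union_right _ (Finset.mem_singleton_self _)
  have hBsub : B ⊆ s.biUnion (t1 n size shape label) := by
    intro r hr
    obtain ⟨c, hc, hr2⟩ := Finset.mem_biUnion.1 hr
    obtain ⟨e, heF, hec⟩ := Finset.mem_image.1 hc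
    subst hec
    obtain ⟨-, hesf, hes1⟩ := Finset.mem_filter.1 heF
    obtain ⟨i, hi, rfl⟩ := Finset.mem_image.1 hr2
    refine Finset.mem_biUnion.2 ⟨shape e, (Finset.mem_filter.1 hesf).1, ?_⟩
    unfold t1
    refine Finset.mem_union_left _ (Finset.mem_biUnion.2 ⟨e, ?_, ?_⟩)
    · exact Finset.mem_filter.2 ⟨Finset.mem_univ _, rfl, hes1⟩
    · exact Finset.mem_image.2 ⟨i, hi, rfl⟩
  have hdisj : Disjoint A B := by
    rw [Finset.disjoint_left]
    intro r hrA hrB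
    obtain ⟨γ, -, rfl⟩ := Finset.mem_image.1 hrA
    obtain ⟨c, -, hr2⟩ := Finset.mem_biUnion.1 hrB
    obtain ⟨i, -, h⟩ := Finset.mem_image.1 hr2
    exact absurd h (by simp)
  have hcardB : B.card = ∑ c ∈ CT, sU n c.2 := by
    rw [hB, Finset.card_biUnion]
    · refine Finset.sum_congr rfl fun c _ => ?_
      rw [Finset.card_image_of_injective _ (fun i j h => by simpa using h),
        Finset.card_range]
    · intro c hc c' hc' hne
      rw [Function.onFun, Finset.disjoint_left]
      rintro r hr hr'
      obtain ⟨i, -, rfl⟩ := Finset.mem_image.1 hr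
      obtain ⟨j, -, h⟩ := Finset.mem_image.1 hr'
      have h2 : (c', j) = (c, i) := by simpa using h
      exact hne (congrArg Prod.fst h2).symm
  -- the key counting inequality
  have hkey : sf.card ≤ ∑ c ∈ CT, sU n c.2 := by
    have hc2 : ∀ c ∈ CT, 1 ≤ c.2 ∧ c.2 ≤ n + 1 := by
      intro c hc
      obtain ⟨e, heF, hec⟩ := Finset.mem_image.1 hc
      obtain ⟨-, -, hes1⟩ := Finset.mem_filter.1 heF |>.imp id id
      have := size_le_of_shape n size shape hshape e
      constructor
      · rw [← hec]; exact (Finset.mem_filter.1 heF).2.2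
      · rw [← hec]; exact this
    refine Nat.le_of_mul_le_mul_left ?_ (Nat.succ_pos n)
    calc (n+1) * sf.card
        = ∑ γ ∈ sf, (n+1) := by rw [Finset.sum_const, smul_eq_mul, mul_comm]
      _ = ∑ γ ∈ sf, ∑ e ∈ Finset.univ.filter (fun e => shape e = γ), size e := by
          refine Finset.sum_congr rfl fun γ hγ => ?_
          exact ((Finset.mem_filter.1 hγ).2).symm
      _ = ∑ γ ∈ sf, ∑ e ∈ (Finset.univ.filter (fun e : E => shape e ∈ sf)).filter
            (fun e => shape e = γ), size e := by
          refine Finset.sum_congr rfl fun γ hγ => ?_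
          congr 1
          ext e
          simp only [Finset.mem_filter, Finset.mem_univ, true_and]
          constructor
          · intro h; exact ⟨by rw [h]; exact hγ, h⟩
          · tauto
      _ = ∑ e ∈ Finset.univ.filter (fun e : E => shape e ∈ sf), size e :=
          Finset.sum_fiberwise_of_maps_to (fun e he => (Finset.mem_filter.1 he).2) _
      _ = ∑ e ∈ F, size e := by
          rw [← Finset.sum_filter_add_sum_filter_not
            (Finset.univ.filter (fun e : E => shape e ∈ sf)) (fun e => 1 ≤ size e) size]
          have h0 : ∑ e ∈ (Finset.univ.filter (fun e : E => shape e ∈ sf)).filter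
              (fun e => ¬ 1 ≤ size e), size e = 0 := by
            refine Finset.sum_eq_zero fun e he => ?_
            have := (Finset.mem_filter.1 he).2
            omega
          rw [h0, add_zero, hF, Finset.filter_filter]
      _ = ∑ c ∈ CT, ∑ e ∈ F.filter (fun e => (label e, size e) = c), size e :=
          (Finset.sum_fiberwise_of_maps_to (fun e he => Finset.mem_image_of_mem _ he) _).symm
      _ ≤ ∑ c ∈ CT, c.2 * scnt size label c.1 c.2 := by
          refine Finset.sum_le_sum fun c hc => ?_
          have h1 : ∑ e ∈ F.filter (fun e => (label e, size e) = c), size e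
              = (F.filter (fun e => (label e, size e) = c)).card * c.2 := by
            rw [Finset.sum_congr rfl (fun e he => ?_), Finset.sum_const, smul_eq_mul]
            have := (Finset.mem_filter.1 he).2
            exact congrArg Prod.snd this
          rw [h1, mul_comm]
          refine Nat.mul_le_mul_left _ ?_
          refine Finset.card_le_card fun e he => ?_
          obtain ⟨heF, hec⟩ := Finset.mem_filter.1 he
          refine Finset.mem_filter.2 ⟨Finset.mem_univ _, ?_, ?_⟩
          · exact congrArg Prod.fst hec
          · exact congrArg Prod.snd hec
      _ ≤ ∑ c ∈ CT, (n+1) * sU n c.2 := by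
          refine Finset.sum_le_sum fun c hc => ?_
          obtain ⟨hc1, hc2'⟩ := hc2 c hc
          calc c.2 * scnt size label c.1 c.2
              ≤ c.2 * (n+1).choose c.2 := Nat.mul_le_mul_left _ (hadm _ _ hc2')
            _ = (n+1) * sU n c.2 := xmul n c.2 hc1
      _ = (n+1) * ∑ c ∈ CT, sU n c.2 := (Finset.mul_sum _ _ _).symm
  -- put it together
  have hcard : snf.card + sf.card ≤ (s.biUnion (t1 n size shape label)).card := by
    have hAB : A ∪ B ⊆ s.biUnion (t1 n size shape label) := Finset.union_subset hAsub hBsub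
    have : A.card + B.card ≤ (s.biUnion (t1 n size shape label)).card := by
      rw [← Finset.card_union_of_disjoint hdisj]
      exact Finset.card_le_card hAB
    have hAcard : A.card = snf.card := Finset.card_image_of_injective _ Sum.inr_injective
    omega
  have hsplit : sf.card + snf.card = s.card :=
    Finset.card_filter_add_card_filter_not _
  omega



set_option linter.unusedSectionVars false

def t2 (size : E → ℕ) (shape : E → K) (label : E → Lab) (q : (Lab × ℕ) × ℕ) : Finset K :=
  (Finset.univ.filter (fun e => label e = q.1.1 ∧ size e = q.1.2)).image shape

def smand (n : ℕ) (size : E → ℕ) (label : E → Lab) : Finset ((Lab × ℕ) × ℕ) :=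
  Finset.univ.biUnion (fun e : E =>
    (Finset.range (sL n size label (label e) (size e))).image (fun i => ((label e, size e), i)))

lemma mem_smand {n : ℕ} {size : E → ℕ} {label : E → Lab} {q : (Lab × ℕ) × ℕ} :
    q ∈ smand n size label ↔
      0 < scnt size label q.1.1 q.1.2 ∧ q.2 < sL n size label q.1.1 q.1.2 := by
  constructor
  · intro hq
    obtain ⟨e, -, hq2⟩ := Finset.mem_biUnion.1 hq
    obtain ⟨i, hi, rfl⟩ := Finset.mem_image.1 hq2
    refine ⟨Finset.card_pos.2 ⟨e, ?_⟩, by simpa using hi⟩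
    exact Finset.mem_filter.2 ⟨Finset.mem_univ _, rfl, rfl⟩
  · rintro ⟨hpos, hlt⟩
    obtain ⟨e, he⟩ := Finset.card_pos.1 hpos
    obtain ⟨-, he1, he2⟩ := Finset.mem_filter.1 he
    refine Finset.mem_biUnion.2 ⟨e, Finset.mem_univ _, ?_⟩
    refine Finset.mem_image.2 ⟨q.2, ?_, ?_⟩
    · rw [Finset.mem_range, he1, he2]; exact hlt
    · rw [he1, he2]


lemma sL_bound (n : ℕ) (size : E → ℕ) (label : E → Lab)
    (hadm : ∀ (ℓ : Lab) (x : ℕ), x ≤ n + 1 → scnt size label ℓ x ≤ (n+1).choose x)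
    (ℓ : Lab) (x : ℕ) (hx : x ≤ n + 1) :
    (n+1) * sL n size label ℓ x ≤ x * scnt size label ℓ x := by
  by_cases hc : scnt size label ℓ x ≤ n.choose x
  · have h0 : sL n size label ℓ x = 0 := Nat.sub_eq_zero_of_le hc
    rw [h0, Nat.mul_zero]; exact Nat.zero_le _
  · push_neg at hc
    have hx1 : 1 ≤ x := by
      by_contra h
      have hx0 : x = 0 := by omega
      subst hx0
      have h1 := hadm ℓ 0 (by omega)
      rw [Nat.choose_zero_right] at h1
      rw [Nat.choose_zero_right] at hc
      omega
    set c := scnt size label ℓ x with hcdef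
    have hcle : c ≤ (n+1).choose x := hadm ℓ x hx
    have hid : (n+1).choose x * (n + 1 - x) = (n+1) * n.choose x := by
      rw [← Nat.choose_succ_right_eq, Nat.add_one_mul_choose_eq]
    have hstep : (n + 1 - x) * c ≤ (n+1) * n.choose x := by
      rw [← hid, mul_comm]
      exact Nat.mul_le_mul_right _ hcle
    have hsum : (n+1) * c = (n + 1 - x) * c + x * c := by
      rw [← Nat.add_mul]
      congr 1
      omega
    have hfin : (n+1) * c ≤ (n+1) * n.choose x + x * c := by
      rw [hsum]; exact Nat.add_le_add_right hstep _
    have : (n+1) * sL n size label ℓ x = (n+1) * c - (n+1) * n.choose x := by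
      rw [sL, ← hcdef, Nat.mul_sub]
    omega

lemma hall2 (n : ℕ) (size : E → ℕ) (shape : E → K) (label : E → Lab)
    (hshape : ∀ γ : K, ∑ e ∈ Finset.univ.filter (fun e => shape e = γ), size e ≤ n + 1)
    (hadm : ∀ (ℓ : Lab) (x : ℕ), x ≤ n + 1 → scnt size label ℓ x ≤ (n+1).choose x) :
    ∀ s : Finset (↥(smand n size label)),
      s.card ≤ (s.biUnion (fun q => t2 size shape label (q : (Lab × ℕ) × ℕ))).card := by
  classical
  intro s
  set T := s.biUnion (fun q => t2 size shape label (q : (Lab × ℕ) × ℕ)) with hT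
  set cls := s.image (fun q : ↥(smand n size label) => q.val.1) with hcls
  -- step 1 : s.card ≤ ∑ of lower bounds
  have h1 : s.card ≤ ∑ c ∈ cls, sL n size label c.1 c.2 := by
    have he : s.card = (s.image ((Subtype.val : ↥(smand n size label) → (Lab × ℕ) × ℕ))).card :=
      (Finset.card_image_of_injective _ Subtype.val_injective).symm
    rw [he]
    have hsub : s.image ((Subtype.val : ↥(smand n size label) → (Lab × ℕ) × ℕ)) ⊆
        cls.biUnion (fun c => (Finset.range (sL n size label c.1 c.2)).image
          (fun i => (c, i))) := by
      intro q hq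
      obtain ⟨q', hq', rfl⟩ := Finset.mem_image.1 hq
      refine Finset.mem_biUnion.2 ⟨q'.val.1, Finset.mem_image_of_mem _ hq', ?_⟩
      obtain ⟨-, hlt⟩ := mem_smand.1 q'.property
      exact Finset.mem_image.2 ⟨q'.val.2, Finset.mem_range.2 hlt, rfl⟩
    refine le_trans (Finset.card_le_card hsub) ?_
    refine le_trans Finset.card_biUnion_le ?_
    refine Finset.sum_le_sum fun c _ => ?_
    exact le_trans (Finset.card_image_le) (by rw [Finset.card_range])
  -- each class in cls is realized by an entry
  have hcmem : ∀ c ∈ cls, 0 < scnt size label c.1 c.2 ∧ c.2 ≤ n + 1 := by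
    intro c hc
    obtain ⟨q', hq', rfl⟩ := Finset.mem_image.1 hc
    obtain ⟨hpos, -⟩ := mem_smand.1 q'.property
    refine ⟨hpos, ?_⟩
    obtain ⟨e, he⟩ := Finset.card_pos.1 hpos
    obtain ⟨-, -, he2⟩ := Finset.mem_filter.1 he
    rw [← he2]
    exact size_le_of_shape n size shape hshape e
  -- step 2 : weighted bound
  have h2 : ∑ c ∈ cls, (n+1) * sL n size label c.1 c.2 ≤
      ∑ c ∈ cls, c.2 * scnt size label c.1 c.2 :=
    Finset.sum_le_sum fun c hc => sL_bound n size label hadm c.1 c.2 (hcmem c hc).2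
  -- step 3 : total size of entries with class in cls is at most (n+1) * T.card
  have h3 : ∑ c ∈ cls, c.2 * scnt size label c.1 c.2 ≤ (n+1) * T.card := by
    have e1 : ∑ c ∈ cls, c.2 * scnt size label c.1 c.2 =
        ∑ e ∈ Finset.univ.filter (fun e : E => (label e, size e) ∈ cls), size e := by
      rw [← Finset.sum_fiberwise_of_maps_to (g := fun e : E => (label e, size e))
        (fun e he => (Finset.mem_filter.1 he).2) size]
      refine Finset.sum_congr rfl fun c hc => ?_
      have hfe : (Finset.univ.filter (fun e : E => (label e, size e) ∈ cls)).filter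
          (fun e => (label e, size e) = c) =
          Finset.univ.filter (fun e => label e = c.1 ∧ size e = c.2) := by
        ext e
        simp only [Finset.mem_filter, Finset.mem_univ, true_and]
        constructor
        · rintro ⟨-, h⟩; exact ⟨congrArg Prod.fst h, congrArg Prod.snd h⟩
        · rintro ⟨h1', h2'⟩
          have hpe : (label e, size e) = c := Prod.ext h1' h2'
          exact ⟨by rw [hpe]; exact hc, hpe⟩
      rw [hfe]
      have hconst : ∀ e ∈ Finset.univ.filter (fun e => label e = c.1 ∧ size e = c.2),
          size e = c.2 := fun e he => (Finset.mem_filter.1 he).2.2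
      rw [Finset.sum_congr rfl hconst, Finset.sum_const, smul_eq_mul, scnt, mul_comm]
    rw [e1]
    have e2 : Finset.univ.filter (fun e : E => (label e, size e) ∈ cls) ⊆
        Finset.univ.filter (fun e : E => shape e ∈ T) := by
      intro e he
      obtain ⟨-, hecls⟩ := Finset.mem_filter.1 he
      obtain ⟨q', hq', hq2⟩ := Finset.mem_image.1 hecls
      refine Finset.mem_filter.2 ⟨Finset.mem_univ _, ?_⟩
      refine Finset.mem_biUnion.2 ⟨q', hq', ?_⟩
      refine Finset.mem_image.2 ⟨e, ?_, rfl⟩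
      refine Finset.mem_filter.2 ⟨Finset.mem_univ _, ?_, ?_⟩
      · exact (congrArg Prod.fst hq2).symm
      · exact (congrArg Prod.snd hq2).symm
    refine le_trans (Finset.sum_le_sum_of_subset e2) ?_
    have e3 : ∑ e ∈ Finset.univ.filter (fun e : E => shape e ∈ T), size e =
        ∑ γ ∈ T, ∑ e ∈ (Finset.univ.filter (fun e : E => shape e ∈ T)).filter
          (fun e => shape e = γ), size e :=
      (Finset.sum_fiberwise_of_maps_to (fun e he => (Finset.mem_filter.1 he).2) _).symm
    rw [e3]
    have e4 : ∀ γ ∈ T, ∑ e ∈ (Finset.univ.filter (fun e : E => shape e ∈ T)).filter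
        (fun e => shape e = γ), size e ≤ n + 1 := by
      intro γ hγ
      refine le_trans (Finset.sum_le_sum_of_subset ?_) (hshape γ)
      intro e he
      obtain ⟨-, h⟩ := Finset.mem_filter.1 he
      exact Finset.mem_filter.2 ⟨Finset.mem_univ _, h⟩
    calc ∑ γ ∈ T, ∑ e ∈ (Finset.univ.filter (fun e : E => shape e ∈ T)).filter
          (fun e => shape e = γ), size e
        ≤ ∑ γ ∈ T, (n+1) := Finset.sum_le_sum e4
      _ = (n+1) * T.card := by rw [Finset.sum_const, smul_eq_mul, mul_comm]
  refine Nat.le_of_mul_le_mul_left ?_ (Nat.succ_pos n)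
  calc (n+1) * s.card ≤ (n+1) * ∑ c ∈ cls, sL n size label c.1 c.2 :=
        Nat.mul_le_mul_left _ h1
    _ = ∑ c ∈ cls, (n+1) * sL n size label c.1 c.2 := Finset.mul_sum _ _ _
    _ ≤ ∑ c ∈ cls, c.2 * scnt size label c.1 c.2 := h2
    _ ≤ (n+1) * T.card := h3


lemma selection_main (n : ℕ) (size : E → ℕ) (shape : E → K) (label : E → Lab)
    (hshape : ∀ γ : K, ∑ e ∈ Finset.univ.filter (fun e => shape e = γ), size e ≤ n + 1)
    (hadm : ∀ (ℓ : Lab) (x : ℕ), x ≤ n + 1 → scnt size label ℓ x ≤ (n+1).choose x) :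
    ∃ D : Finset E,
      (∀ e ∈ D, 1 ≤ size e) ∧
      (∀ γ : K, (D.filter (fun e => shape e = γ)).card ≤ 1) ∧
      (∀ γ : K, sFull n size shape γ → 1 ≤ (D.filter (fun e => shape e = γ)).card) ∧
      (∀ (ℓ : Lab) (x : ℕ), x ≤ n →
        ((Finset.univ.filter (fun e => e ∉ D ∧ label e = ℓ ∧ size e = x)).card ≤ n.choose x)) ∧
      (∀ (ℓ : Lab) (x : ℕ),
        ((D.filter (fun e => label e = ℓ ∧ size e = x)).card ≤ n.choose (x - 1))) := by
  classical
  by_cases hK : Nonempty K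
  swap
  · refine ⟨∅, by simp, by simp, fun γ _ => absurd ⟨γ⟩ hK, ?_, by simp⟩
    intro ℓ x hx
    have : Finset.univ.filter (fun e : E => e ∉ (∅ : Finset E) ∧ label e = ℓ ∧ size e = x) = ∅ := by
      have hE : IsEmpty E := ⟨fun e => hK ⟨shape e⟩⟩
      simp
    rw [this]; simp
  haveI := hK
  -- size of every entry is ≤ n+1, so classes with large x are empty
  have hscnt0 : ∀ (ℓ : Lab) (x : ℕ), n + 1 < x → scnt size label ℓ x = 0 := by
    intro ℓ x hx
    rw [scnt, Finset.card_eq_zero]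
    rw [Finset.filter_eq_empty_iff]
    rintro e - ⟨-, hsz⟩
    have := size_le_of_shape n size shape hshape e
    omega
  have hsLle : ∀ (ℓ : Lab) (x : ℕ), 1 ≤ x → sL n size label ℓ x ≤ sU n x := by
    intro ℓ x hx
    by_cases hxle : x ≤ n + 1
    · obtain ⟨y, rfl⟩ : ∃ y, x = y + 1 := ⟨x - 1, by omega⟩
      have h := hadm ℓ (y+1) hxle
      rw [Nat.choose_succ_succ'] at h
      rw [sL, sU]
      simp only [Nat.add_sub_cancel]
      omega
    · rw [sL, hscnt0 ℓ x (by omega)]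
      simp [sU]
  -- Hall for shapes
  obtain ⟨f, hfinj, hfmem⟩ :=
    (Finset.all_card_le_biUnion_card_iff_exists_injective (t1 n size shape label)).1
      (hall1 n size shape label hshape hadm)
  -- Hall for mandatory slots
  obtain ⟨g, hginj, hgmem⟩ :=
    (Finset.all_card_le_biUnion_card_iff_exists_injective
      (fun q : ↥(smand n size label) => t2 size shape label (q : (Lab × ℕ) × ℕ))).1
      (hall2 n size shape label hshape hadm)
  -- the adjacency relation
  set adj : K → (((Lab × ℕ) × ℕ) ⊕ K) → Prop := fun γ r =>
    (∃ c i, r = Sum.inl (c, i) ∧ (∃ e, shape e = γ ∧ label e = c.1 ∧ size e = c.2) ∧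
      1 ≤ c.2 ∧ i < sU n c.2) ∨ (r = Sum.inr γ ∧ ¬ sFull n size shape γ) with hadj
  have h1adj : ∀ γ, adj γ (f γ) := by
    intro γ
    have hm := hfmem γ
    unfold t1 at hm
    rcases Finset.mem_union.1 hm with hm | hm
    · obtain ⟨e, he, hm2⟩ := Finset.mem_biUnion.1 hm
      obtain ⟨-, hsh, hsz⟩ := Finset.mem_filter.1 he
      obtain ⟨i, hi, hfi⟩ := Finset.mem_image.1 hm2
      exact Or.inl ⟨(label e, size e), i, hfi.symm, ⟨e, hsh, rfl, rfl⟩, hsz,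
        Finset.mem_range.1 hi⟩
    · by_cases hfull : sFull n size shape γ
      · rw [if_pos hfull] at hm; exact absurd hm (Finset.notMem_empty _)
      · rw [if_neg hfull] at hm
        exact Or.inr ⟨Finset.mem_singleton.1 hm, hfull⟩
  set Y : Set (((Lab × ℕ) × ℕ) ⊕ K) :=
    {r | ∃ q, q ∈ smand n size label ∧ r = Sum.inl q} with hY
  set M2 : (((Lab × ℕ) × ℕ) ⊕ K) → K := fun r =>
    Sum.elim (fun q => if h : q ∈ smand n size label then g ⟨q, h⟩ else Classical.arbitrary K)
      (fun γ => γ) r with hM2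
  have h2inj : Set.InjOn M2 Y := by
    rintro r ⟨q, hq, rfl⟩ r' ⟨q', hq', rfl⟩ he
    simp only [hM2, Sum.elim_inl, dif_pos hq, dif_pos hq'] at he
    have := hginj he
    exact congrArg (fun t : {x // x ∈ smand n size label} =>
      (Sum.inl t.val : ((Lab × ℕ) × ℕ) ⊕ K)) this
  have h2adj : ∀ r ∈ Y, adj (M2 r) r := by
    rintro r ⟨q, hq, rfl⟩
    simp only [hM2, Sum.elim_inl, dif_pos hq]
    obtain ⟨hpos, hlt⟩ := mem_smand.1 hq
    have hx1 : 1 ≤ q.1.2 := by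
      by_contra h
      have hx0 : q.1.2 = 0 := by omega
      have h1 := hadm q.1.1 q.1.2 (by omega)
      rw [hx0, Nat.choose_zero_right] at h1
      rw [sL, hx0, Nat.choose_zero_right] at hlt
      omega
    refine Or.inl ⟨q.1, q.2, rfl, ?_, hx1, lt_of_lt_of_le hlt (hsLle _ _ hx1)⟩
    have := hgmem ⟨q, hq⟩
    obtain ⟨e, he, hsh⟩ := Finset.mem_image.1 this
    obtain ⟨-, hl, hs⟩ := Finset.mem_filter.1 he
    exact ⟨e, hsh, hl, hs⟩
  obtain ⟨M, hMinj, hMadj, hMsat⟩ := md_matching adj f hfinj h1adj Y M2 h2inj h2adj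
  -- basic facts about M
  have hMc : ∀ γ c i, M γ = Sum.inl (c, i) →
      (∃ e, shape e = γ ∧ label e = c.1 ∧ size e = c.2) ∧ 1 ≤ c.2 ∧ i < sU n c.2 := by
    intro γ c i hM
    rcases hMadj γ with ⟨c', i', heq, he, h1, h2⟩ | ⟨heq, -⟩
    · rw [hM] at heq
      obtain ⟨h3, h4⟩ := Prod.mk.inj (Sum.inl_injective heq)
      rw [h3, h4]
      exact ⟨he, h1, h2⟩
    · rw [hM] at heq; exact absurd heq (by simp)
  -- the partial selection function
  set w : K → Option E := fun γ =>
    if h : ∃ e, shape e = γ ∧ ∃ i, M γ = Sum.inl ((label e, size e), i)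
    then some h.choose else none with hw
  have hw1 : ∀ γ e, w γ = some e →
      shape e = γ ∧ ∃ i, M γ = Sum.inl ((label e, size e), i) := by
    intro γ e hwe
    by_cases h : ∃ e, shape e = γ ∧ ∃ i, M γ = Sum.inl ((label e, size e), i)
    · rw [hw] at hwe; simp only [dif_pos h] at hwe
      rw [← Option.some_inj.1 hwe]
      exact h.choose_spec
    · rw [hw] at hwe; simp only [dif_neg h] at hwe
      cases hwe
  have hwsome : ∀ γ q, M γ = Sum.inl q →
      ∃ e, w γ = some e ∧ shape e = γ ∧ (label e, size e) = q.1 ∧ 1 ≤ size e := by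
    intro γ q hM
    obtain ⟨c, i⟩ := q
    obtain ⟨⟨e0, hsh0, hl0, hs0⟩, hc1, -⟩ := hMc γ c i hM
    have h : ∃ e, shape e = γ ∧ ∃ i, M γ = Sum.inl ((label e, size e), i) := by
      refine ⟨e0, hsh0, i, ?_⟩
      rw [hM, hl0, hs0]
    refine ⟨h.choose, by rw [hw]; simp only [dif_pos h], h.choose_spec.1, ?_, ?_⟩
    · obtain ⟨i', hi⟩ := h.choose_spec.2
      have hi2 := hM.symm.trans hi
      exact ((Prod.mk.inj (Sum.inl_injective hi2)).1).symm
    · obtain ⟨i', hi⟩ := h.choose_spec.2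
      have hi2 := hM.symm.trans hi
      have h5 : c = (label h.choose, size h.choose) :=
        (Prod.mk.inj (Sum.inl_injective hi2)).1
      have h6 : size h.choose = c.2 := (congrArg Prod.snd h5).symm
      omega
  set D : Finset E := Finset.univ.filter (fun e => w (shape e) = some e) with hD
  have hDmem : ∀ e, e ∈ D ↔ w (shape e) = some e := by
    intro e; rw [hD]; simp
  refine ⟨D, ?_, ?_, ?_, ?_, ?_⟩
  · -- sizes at least 1
    intro e he
    obtain ⟨-, i, hM⟩ := hw1 _ _ ((hDmem e).1 he)
    exact (hMc _ _ _ hM).2.1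
  · -- at most one per shape
    intro γ
    refine Finset.card_le_one.2 fun a ha b hb => ?_
    obtain ⟨haD, hash⟩ := Finset.mem_filter.1 ha
    obtain ⟨hbD, hbsh⟩ := Finset.mem_filter.1 hb
    have h1 := (hDmem a).1 haD
    have h2 := (hDmem b).1 hbD
    rw [hash] at h1; rw [hbsh] at h2
    rw [h1] at h2
    exact Option.some_inj.1 h2
  · -- full shapes get one
    intro γ hfull
    rcases hMadj γ with ⟨c, i, heq, -, -, -⟩ | ⟨-, hnf⟩
    · obtain ⟨e, hwe, hsh, -, -⟩ := hwsome γ (c, i) heq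
      refine Finset.card_pos.2 ⟨e, Finset.mem_filter.2 ⟨?_, hsh⟩⟩
      rw [hDmem, hsh]; exact hwe
    · exact absurd hfull hnf
  · -- not-selected classes are small
    intro ℓ x hx
    by_cases h0 : sL n size label ℓ x = 0
    · have hle : scnt size label ℓ x ≤ n.choose x := by
        rw [sL] at h0; omega
      refine le_trans (le_trans (Finset.card_le_card ?_) le_rfl) hle
      intro e he
      obtain ⟨-, -, hcl⟩ := Finset.mem_filter.1 he
      exact Finset.mem_filter.2 ⟨Finset.mem_univ _, hcl⟩
    · -- mandatory count forces enough selected entries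
      have hpos : 0 < scnt size label ℓ x := by
        rw [sL] at h0; rw [scnt]; rw [scnt] at h0; omega
      have hEne : Nonempty E := by
        obtain ⟨e, he⟩ := Finset.card_pos.1 hpos
        exact ⟨e⟩
      set Ms : Finset ((Lab × ℕ) × ℕ) :=
        (Finset.range (sL n size label ℓ x)).image (fun i => (((ℓ, x) : Lab × ℕ), i)) with hMs
      have hMscard : Ms.card = sL n size label ℓ x := by
        rw [hMs, Finset.card_image_of_injective _ (fun i j h => (Prod.mk.inj h).2),
          Finset.card_range]
      set TA : Finset E := D.filter (fun e => label e = ℓ ∧ size e = x) with hTA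
      have hinj : sL n size label ℓ x ≤ TA.card := by
        rw [← hMscard]
        set fm : ((Lab × ℕ) × ℕ) → E := fun q =>
          if h : ∃ e, (∃ γ, M γ = Sum.inl q ∧ w γ = some e) then h.choose
          else Classical.arbitrary E with hfm
        refine Finset.card_le_card_of_injOn fm ?_ ?_
        · intro q hq
          obtain ⟨i, hi, rfl⟩ := Finset.mem_image.1 hq
          have hqmand : ((ℓ, x), i) ∈ smand n size label :=
            mem_smand.2 ⟨hpos, Finset.mem_range.1 hi⟩
          obtain ⟨γ, hγ⟩ := hMsat (Sum.inl ((ℓ, x), i)) ⟨_, hqmand, rfl⟩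
          obtain ⟨e, hwe, hsh, hcl, -⟩ := hwsome γ ((ℓ, x), i) hγ
          have hex : ∃ e, (∃ γ, M γ = Sum.inl (((ℓ, x) : Lab × ℕ), i) ∧ w γ = some e) :=
            ⟨e, γ, hγ, hwe⟩
          rw [hfm]
          simp only [dif_pos hex]
          obtain ⟨γ', hγ', hwe'⟩ := hex.choose_spec
          obtain ⟨hsh', i', hMi⟩ := hw1 _ _ hwe'
          rw [hγ'] at hMi
          have hcl' := (Prod.mk.inj (Sum.inl_injective hMi)).1
          refine Finset.mem_filter.2 ⟨?_, ?_, ?_⟩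
          · rw [hDmem, hsh']; exact hwe'
          · exact (congrArg Prod.fst hcl').symm
          · exact (congrArg Prod.snd hcl').symm
        · intro q hq q' hq' heq
          have hget : ∀ r ∈ Ms, ∃ e, (∃ γ, M γ = Sum.inl r ∧ w γ = some e) := by
            intro r hr
            obtain ⟨i, hi, rfl⟩ := Finset.mem_image.1 hr
            have hqmand : ((ℓ, x), i) ∈ smand n size label :=
              mem_smand.2 ⟨hpos, Finset.mem_range.1 hi⟩
            obtain ⟨γ, hγ⟩ := hMsat (Sum.inl ((ℓ, x), i)) ⟨_, hqmand, rfl⟩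
            obtain ⟨e, hwe, -⟩ := hwsome γ ((ℓ, x), i) hγ
            exact ⟨e, γ, hγ, hwe⟩
          have h1 := hget q hq
          have h2 := hget q' hq'
          rw [hfm] at heq
          simp only [dif_pos h1, dif_pos h2] at heq
          obtain ⟨γ1, hγ1, hw1'⟩ := h1.choose_spec
          obtain ⟨γ2, hγ2, hw2'⟩ := h2.choose_spec
          have hs1 := (hw1 _ _ hw1').1
          have hs2 := (hw1 _ _ hw2').1
          have : γ1 = γ2 := by rw [← hs1, ← hs2, heq]
          rw [this] at hγ1
          rw [hγ1] at hγ2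
          exact Sum.inl_injective hγ2
      -- now conclude by arithmetic
      have hsplit : (Finset.univ.filter (fun e => e ∉ D ∧ label e = ℓ ∧ size e = x)).card +
          TA.card = scnt size label ℓ x := by
        rw [scnt, hTA]
        have e1 : Finset.univ.filter (fun e => e ∉ D ∧ label e = ℓ ∧ size e = x) =
            (Finset.univ.filter (fun e => label e = ℓ ∧ size e = x)).filter
              (fun e => e ∉ D) := by
          ext e; simp only [Finset.mem_filter, Finset.mem_univ, true_and]; tauto
        have e2 : D.filter (fun e => label e = ℓ ∧ size e = x) =
            (Finset.univ.filter (fun e => label e = ℓ ∧ size e = x)).filter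
              (fun e => e ∈ D) := by
          ext e; simp only [Finset.mem_filter, Finset.mem_univ, true_and]; tauto
        rw [e1, e2]
        rw [add_comm]
        exact Finset.card_filter_add_card_filter_not _
      have harith := hadm ℓ x (by omega)
      rw [sL] at hinj
      omega
  · -- selected classes are small
    intro ℓ x
    have htarget : ((Finset.range (sU n x)).image
        (fun i => (Sum.inl (((ℓ, x) : Lab × ℕ), i) : ((Lab × ℕ) × ℕ) ⊕ K))).card = sU n x := by
      rw [Finset.card_image_of_injective _
        (fun i j h => (Prod.mk.inj (Sum.inl_injective h)).2), Finset.card_range]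
    have : (D.filter (fun e => label e = ℓ ∧ size e = x)).card ≤ sU n x := by
      rw [← htarget]
      refine Finset.card_le_card_of_injOn (fun e => M (shape e)) ?_ ?_
      · intro e he
        obtain ⟨heD, hl, hs⟩ := Finset.mem_filter.1 he
        obtain ⟨-, i, hM⟩ := hw1 _ _ ((hDmem e).1 heD)
        obtain ⟨-, -, hi⟩ := hMc _ _ _ hM
        refine Finset.mem_image.2 ⟨i, Finset.mem_range.2 (by rw [← hs]; exact hi), ?_⟩
        show Sum.inl ((ℓ, x), i) = M (shape e)
        rw [hM, hl, hs]
      · intro e he e' he' heq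
        have hsh : shape e = shape e' := hMinj heq
        have h1 := (hDmem e).1 (Finset.mem_filter.1 he).1
        have h2 := (hDmem e').1 (Finset.mem_filter.1 he').1
        rw [hsh] at h1
        rw [h1] at h2
        exact Option.some_inj.1 h2
    exact this


lemma general_realize : ∀ (n : ℕ) {E K Lab : Type*} [Fintype E] [DecidableEq E]
    [DecidableEq K] [DecidableEq Lab]
    (size : E → ℕ) (shape : E → K) (label : E → Lab),
    (∀ γ : K, ∑ e ∈ Finset.univ.filter (fun e => shape e = γ), size e ≤ n) →
    (∀ (ℓ : Lab) (x : ℕ), x ≤ n → scnt size label ℓ x ≤ n.choose x) →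
    ∃ T : E → Finset (Fin n),
      (∀ e, (T e).card = size e) ∧
      (∀ e e', e ≠ e' → shape e = shape e' → Disjoint (T e) (T e')) ∧
      (∀ e e', e ≠ e' → label e = label e' → T e ≠ T e') := by
  intro n
  induction n with
  | zero =>
    intro E K Lab _ _ _ _ size shape label hshape hadm
    have hsz : ∀ e, size e = 0 := by
      intro e
      have h1 : size e ≤ ∑ e' ∈ Finset.univ.filter (fun e' => shape e' = shape e), size e' :=
        Finset.single_le_sum (fun _ _ => Nat.zero_le _) (by simp)
      have := hshape (shape e)
      omega
    refine ⟨fun _ => ∅, fun e => by rw [hsz e]; simp, fun _ _ _ _ => disjoint_bot_left, ?_⟩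
    intro e e' hne hlab
    exfalso
    have hsub : ({e, e'} : Finset E) ⊆
        Finset.univ.filter (fun a => label a = label e ∧ size a = 0) := by
      intro a ha
      rcases Finset.mem_insert.1 ha with rfl | ha
      · exact Finset.mem_filter.2 ⟨Finset.mem_univ _, rfl, hsz a⟩
      · rw [Finset.mem_singleton.1 ha]
        exact Finset.mem_filter.2 ⟨Finset.mem_univ _, hlab.symm, hsz e'⟩
    have hc2 : ({e, e'} : Finset E).card = 2 := Finset.card_pair hne
    have := Finset.card_le_card hsub
    have hb := hadm (label e) 0 le_rfl
    rw [scnt] at hb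
    simp only [Nat.choose_self] at hb
    omega
  | succ n ih =>
    intro E K Lab _ _ _ _ size shape label hshape hadm
    obtain ⟨D, hD1, hD2, hD3, hD4, hD5⟩ := selection_main n size shape label hshape
      (fun ℓ x hx => hadm ℓ x hx)
    classical
    set size' : E → ℕ := fun e => size e - (if e ∈ D then 1 else 0) with hsize'
    set label' : E → Lab × Bool := fun e => (label e, decide (e ∈ D)) with hlabel'
    -- new shape sums
    have hshape' : ∀ γ : K, ∑ e ∈ Finset.univ.filter (fun e => shape e = γ), size' e ≤ n := by
      intro γ
      by_cases hne : (D.filter (fun e => shape e = γ)).Nonempty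
      · obtain ⟨e0, he0⟩ := hne
        obtain ⟨he0D, he0sh⟩ := Finset.mem_filter.1 he0
        have honly : ∀ e ∈ (Finset.univ.filter (fun e => shape e = γ)).erase e0, e ∉ D := by
          intro e he heD
          obtain ⟨hne0, hmem⟩ := Finset.mem_erase.1 he
          have : e ∈ D.filter (fun e => shape e = γ) :=
            Finset.mem_filter.2 ⟨heD, (Finset.mem_filter.1 hmem).2⟩
          have hcard := hD2 γ
          have : ({e0, e} : Finset E) ⊆ D.filter (fun e => shape e = γ) := by
            intro a ha
            rcases Finset.mem_insert.1 ha with rfl | ha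
            · exact he0
            · rw [Finset.mem_singleton.1 ha]; exact this
          have h2 := Finset.card_le_card this
          rw [Finset.card_pair (fun h => hne0 h.symm)] at h2
          omega
        have hmem0 : e0 ∈ Finset.univ.filter (fun e => shape e = γ) :=
          Finset.mem_filter.2 ⟨Finset.mem_univ _, he0sh⟩
        have hs1 : ∑ e ∈ (Finset.univ.filter (fun e => shape e = γ)).erase e0, size' e +
            size' e0 = ∑ e ∈ Finset.univ.filter (fun e => shape e = γ), size' e :=
          Finset.sum_erase_add _ _ hmem0
        have hs2 : ∑ e ∈ (Finset.univ.filter (fun e => shape e = γ)).erase e0, size e +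
            size e0 = ∑ e ∈ Finset.univ.filter (fun e => shape e = γ), size e :=
          Finset.sum_erase_add _ _ hmem0
        have hs3 : ∑ e ∈ (Finset.univ.filter (fun e => shape e = γ)).erase e0, size' e =
            ∑ e ∈ (Finset.univ.filter (fun e => shape e = γ)).erase e0, size e := by
          refine Finset.sum_congr rfl fun e he => ?_
          rw [hsize']
          simp only [if_neg (honly e he), Nat.sub_zero]
        have hs4 : size' e0 = size e0 - 1 := by
          rw [hsize']; simp only [if_pos he0D]
        have hs5 : 1 ≤ size e0 := hD1 e0 he0D
        have hs6 := hshape γ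
        omega
      · have heq : ∀ e ∈ Finset.univ.filter (fun e => shape e = γ), size' e = size e := by
          intro e he
          have heD : e ∉ D := by
            intro hD
            exact hne ⟨e, Finset.mem_filter.2 ⟨hD, (Finset.mem_filter.1 he).2⟩⟩
          rw [hsize']; simp only [if_neg heD, Nat.sub_zero]
        have h0 : ∑ e ∈ Finset.univ.filter (fun e => shape e = γ), size' e =
            ∑ e ∈ Finset.univ.filter (fun e => shape e = γ), size e :=
          Finset.sum_congr rfl heq
        rw [h0]
        have h1 := hshape γ
        have h2 : ∑ e ∈ Finset.univ.filter (fun e => shape e = γ), size e ≠ n + 1 := by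
          intro hfull
          have := hD3 γ hfull
          exact hne (Finset.card_pos.1 this)
        omega
    -- new admissibility
    have hadm' : ∀ (ℓb : Lab × Bool) (y : ℕ), y ≤ n →
        scnt size' label' ℓb y ≤ n.choose y := by
      rintro ⟨ℓ, b⟩ y hy
      rcases b with _ | _
      · -- b = false : entries not in D
        have hfe : Finset.univ.filter (fun e => label' e = (ℓ, false) ∧ size' e = y) =
            Finset.univ.filter (fun e => e ∉ D ∧ label e = ℓ ∧ size e = y) := by
          ext e
          simp only [Finset.mem_filter, Finset.mem_univ, true_and, hlabel', hsize',
            Prod.mk.injEq, decide_eq_false_iff_not]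
          constructor
          · rintro ⟨⟨h1, h2⟩, h3⟩
            rw [if_neg h2, Nat.sub_zero] at h3
            exact ⟨h2, h1, h3⟩
          · rintro ⟨h1, h2, h3⟩
            rw [if_neg h1, Nat.sub_zero]
            exact ⟨⟨h2, h1⟩, h3⟩
        rw [scnt, hfe]
        exact hD4 ℓ y hy
      · -- b = true : entries in D
        have hfe : Finset.univ.filter (fun e => label' e = (ℓ, true) ∧ size' e = y) =
            D.filter (fun e => label e = ℓ ∧ size e = y + 1) := by
          ext e
          simp only [Finset.mem_filter, Finset.mem_univ, true_and, hlabel', hsize',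
            Prod.mk.injEq, decide_eq_true_eq]
          constructor
          · rintro ⟨⟨h1, h2⟩, h3⟩
            rw [if_pos h2] at h3
            have := hD1 e h2
            exact ⟨h2, h1, by omega⟩
          · rintro ⟨h1, h2, h3⟩
            rw [if_pos h1]
            exact ⟨⟨h2, h1⟩, by omega⟩
        rw [scnt, hfe]
        have := hD5 ℓ (y + 1)
        simpa using this
    obtain ⟨T', hT1, hT2, hT3⟩ := ih size' shape label' hshape' hadm'
    have hlastnot : ∀ s : Finset (Fin n), Fin.last n ∉ s.map Fin.castSuccEmb := by
      intro s h
      obtain ⟨a, -, ha⟩ := Finset.mem_map.1 h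
      exact absurd ha (Fin.ne_of_lt (Fin.castSucc_lt_last a))
    set T : E → Finset (Fin (n+1)) := fun e =>
      if e ∈ D then insert (Fin.last n) ((T' e).map Fin.castSuccEmb)
      else (T' e).map Fin.castSuccEmb with hT
    refine ⟨T, ?_, ?_, ?_⟩
    · intro e
      rw [hT]
      by_cases he : e ∈ D
      · simp only [if_pos he]
        rw [Finset.card_insert_of_notMem (hlastnot _), Finset.card_map, hT1 e]
        have := hD1 e he
        rw [hsize']
        simp only [if_pos he]
        omega
      · simp only [if_neg he]
        rw [Finset.card_map, hT1 e, hsize']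
        simp only [if_neg he, Nat.sub_zero]
    · intro e e' hne hsh
      have hdisj' : Disjoint ((T' e).map Fin.castSuccEmb) ((T' e').map Fin.castSuccEmb) := by
        rw [Finset.disjoint_map]
        exact hT2 e e' hne hsh
      have hnotboth : ¬ (e ∈ D ∧ e' ∈ D) := by
        rintro ⟨h1, h2⟩
        have hsub : ({e, e'} : Finset E) ⊆ D.filter (fun a => shape a = shape e) := by
          intro a ha
          rcases Finset.mem_insert.1 ha with rfl | ha
          · exact Finset.mem_filter.2 ⟨h1, rfl⟩
          · rw [Finset.mem_singleton.1 ha]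
            exact Finset.mem_filter.2 ⟨h2, hsh.symm⟩
        have hc := Finset.card_le_card hsub
        rw [Finset.card_pair hne] at hc
        have := hD2 (shape e)
        omega
      rw [hT]
      by_cases h1 : e ∈ D <;> by_cases h2 : e' ∈ D
      · exact absurd ⟨h1, h2⟩ hnotboth
      · simp only [if_pos h1, if_neg h2]
        rw [Finset.disjoint_insert_left]
        exact ⟨hlastnot _, hdisj'⟩
      · simp only [if_neg h1, if_pos h2]
        rw [Finset.disjoint_insert_right]
        exact ⟨hlastnot _, hdisj'⟩
      · simp only [if_neg h1, if_neg h2]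
        exact hdisj'
    · intro e e' hne hlab
      rw [hT]
      by_cases h1 : e ∈ D <;> by_cases h2 : e' ∈ D
      · simp only [if_pos h1, if_pos h2]
        have hT'ne : T' e ≠ T' e' := by
          refine hT3 e e' hne ?_
          rw [hlabel']
          simp [hlab, h1, h2]
        intro hcontra
        apply hT'ne
        have h3 := congrArg (fun s => Finset.erase s (Fin.last n)) hcontra
        simp only [Finset.erase_insert (hlastnot _)] at h3
        exact Finset.map_injective _ h3
      · simp only [if_pos h1, if_neg h2]
        intro hcontra
        have : Fin.last n ∈ (T' e').map Fin.castSuccEmb := by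
          rw [← hcontra]; exact Finset.mem_insert_self _ _
        exact hlastnot _ this
      · simp only [if_neg h1, if_pos h2]
        intro hcontra
        have : Fin.last n ∈ (T' e).map Fin.castSuccEmb := by
          rw [hcontra]; exact Finset.mem_insert_self _ _
        exact hlastnot _ this
      · simp only [if_neg h1, if_neg h2]
        intro hcontra
        have hT'ne : T' e ≠ T' e' := by
          refine hT3 e e' hne ?_
          rw [hlabel']
          simp [hlab, h1, h2]
        exact hT'ne (Finset.map_injective _ hcontra)

end Selection

/-- A type for ground-set size `N` is realizable if and only if it is admissible. -/
theorem stmt6 (N : ℕ) (hN : 0 < N)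
    (k : ℕ) (p : Fin k → ℕ) (m : (γ : Fin k) → Fin (p γ) → ℕ)
    (htype : IsType N k p m) :
    Realizable N k p m ↔ Admissible N k p m := by
  constructor
  · rintro ⟨S, hcard, hdisj, hdist⟩ x hx
    have h : ((Finset.univ : Finset ((γ : Fin k) × Fin (p γ))).filter
        (fun q => m q.1 q.2 = x)).card ≤
        ((Finset.univ : Finset (Fin N)).powersetCard x).card := by
      refine Finset.card_le_card_of_injOn (fun q => S q.1 q.2) ?_ ?_
      · intro q hq
        refine Finset.mem_powersetCard.2 ⟨Finset.subset_univ _, ?_⟩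
        rw [hcard q.1 q.2]
        exact (Finset.mem_filter.1 hq).2
      · intro q hq q' hq' he
        by_contra hne
        exact hdist q q' hne he
    rwa [Finset.card_powersetCard, Finset.card_univ, Fintype.card_fin] at h
  · intro hadm
    classical
    have hshape : ∀ γ : Fin k, ∑ e ∈ Finset.univ.filter
        (fun e : (γ' : Fin k) × Fin (p γ') => e.1 = γ), m e.1 e.2 ≤ N := by
      intro γ
      have himg : Finset.univ.filter (fun e : (γ' : Fin k) × Fin (p γ') => e.1 = γ) =
          Finset.univ.image (fun j : Fin (p γ) => (⟨γ, j⟩ : (γ' : Fin k) × Fin (p γ'))) := by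
        ext ⟨γ', j⟩
        simp only [Finset.mem_filter, Finset.mem_univ, true_and, Finset.mem_image]
        constructor
        · rintro rfl; exact ⟨j, rfl⟩
        · rintro ⟨j', hj⟩
          exact (Sigma.mk.inj_iff.1 hj).1.symm
      rw [himg, Finset.sum_image ?hinj]
      case hinj =>
        intro j _ j' _ h
        exact eq_of_heq (Sigma.mk.inj_iff.1 h).2
      exact htype γ
    have hadm2 : ∀ (ℓ : Unit) (x : ℕ), x ≤ N →
        scnt (fun e : (γ' : Fin k) × Fin (p γ') => m e.1 e.2) (fun _ => ()) ℓ x ≤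
          N.choose x := by
      intro ℓ x hx
      rw [scnt]
      have hfe : (Finset.univ.filter
          (fun e : (γ' : Fin k) × Fin (p γ') => (fun _ => ()) e = ℓ ∧ m e.1 e.2 = x)) =
          (Finset.univ.filter (fun q : (γ' : Fin k) × Fin (p γ') => m q.1 q.2 = x)) := by
        ext e
        simp
      rw [hfe]
      exact hadm x hx
    obtain ⟨N', rfl⟩ : ∃ N', N = N' + 1 := ⟨N - 1, by omega⟩
    obtain ⟨T, hT1, hT2, hT3⟩ := general_realize (N' + 1)
      (fun e : (γ' : Fin k) × Fin (p γ') => m e.1 e.2) (fun e => e.1) (fun _ => ())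
      hshape hadm2
    refine ⟨fun γ j => T ⟨γ, j⟩, fun γ j => hT1 ⟨γ, j⟩, ?_, ?_⟩
    · intro γ j j' hne
      refine hT2 ⟨γ, j⟩ ⟨γ, j'⟩ ?_ rfl
      intro h
      exact hne (eq_of_heq (Sigma.mk.inj_iff.1 h).2)
    · intro q q' hne
      exact hT3 q q' hne rfl
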